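/- Let N ≥ 1, ε ∈ ℝ, and let λ, λ̃ ∈ ℝ with λ ≠ 0, λ̃ ≠ 0 and λ ≠ λ̃. Let r₁,…,r_N : ℝ² → ℝ be smooth functions of (x,τ) with 1 − r_m(x,τ)/λ > 0 and 1 − r_m(x,τ)/λ̃ > 0 for all m and all (x,τ). Define μ := Π_{m=1}^N (1 − r_m/λ)^{−ε} and μ̃ := Π_{m=1}^N (1 − r_m/λ̃)^{−ε}. Suppose ∂_τ r_i = [1/((1 − r_i/λ̃) μ̃)] ∂_x r_i for every i. Then ∂_τ μ = (λ̃/(λ̃ − λ)) ∂_x(μ/μ̃) everywhere. -/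

import Mathlib

open Real Set

/-- Partial derivative in the first variable. -/
noncomputable def pdx (f : ℝ → ℝ → ℝ) (x t : ℝ) : ℝ := deriv (fun x' => f x' t) x

/-- Partial derivative in the second variable. -/
noncomputable def pdt (f : ℝ → ℝ → ℝ) (x t : ℝ) : ℝ := deriv (fun t' => f x t') t

/-- For the generating function of commuting flows of the ε-system,
`∂_τ rᵢ = [1/((1 − rᵢ/λ̃) μ̃)] ∂ₓ rᵢ`, the generating function
`μ = Π (1 − r_m/λ)^{−ε}` satisfies `∂_τ μ = (λ̃/(λ̃ − λ)) ∂ₓ(μ/μ̃)`. -/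
theorem generating_function_commuting_flows_conservation
    (N : ℕ) (hN : 1 ≤ N) (ε : ℝ) (l lt : ℝ) (hl : l ≠ 0) (hlt : lt ≠ 0) (hll : l ≠ lt)
    (r : ℝ → ℝ → Fin N → ℝ)
    (hr : ContDiff ℝ (⊤ : ℕ∞) (fun p : ℝ × ℝ => r p.1 p.2))
    (hpos : ∀ (x τ : ℝ) (m : Fin N), 0 < 1 - r x τ m / l)
    (hpos' : ∀ (x τ : ℝ) (m : Fin N), 0 < 1 - r x τ m / lt)
    (μ : ℝ → ℝ → ℝ)
    (hμ : ∀ x τ : ℝ, μ x τ = ∏ m, (1 - r x τ m / l) ^ (-ε))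
    (μt : ℝ → ℝ → ℝ)
    (hμt : ∀ x τ : ℝ, μt x τ = ∏ m, (1 - r x τ m / lt) ^ (-ε))
    (hsys : ∀ (i : Fin N) (x τ : ℝ),
      pdt (fun x' τ' => r x' τ' i) x τ
        = (1 / ((1 - r x τ i / lt) * μt x τ)) * pdx (fun x' τ' => r x' τ' i) x τ) :
    ∀ x τ : ℝ,
      pdt μ x τ = (lt / (lt - l)) * pdx (fun x' τ' => μ x' τ' / μt x' τ') x τ := by
  intro x τ
  -- coordinatewise smoothness
  have hrm : ∀ m : Fin N, ContDiff ℝ (⊤ : ℕ∞) (fun p : ℝ × ℝ => r p.1 p.2 m) :=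
    fun m => (contDiff_pi.mp hr) m
  have hdx : ∀ m : Fin N, DifferentiableAt ℝ (fun x' => r x' τ m) x := by
    intro m
    have h := (((hrm m).differentiable (by simp)) (x, τ)).comp x
      (((differentiableAt_id : DifferentiableAt ℝ (id : ℝ → ℝ) x).prodMk (differentiableAt_const τ)))
    exact h
  have hdt : ∀ m : Fin N, DifferentiableAt ℝ (fun τ' => r x τ' m) τ := by
    intro m
    have h := (((hrm m).differentiable (by simp)) (x, τ)).comp τ
      (((differentiableAt_const x).prodMk differentiableAt_id))
    exact h
  -- exponential representations
  have hμexp : ∀ x' τ' : ℝ, μ x' τ' = Real.exp (-ε * ∑ m, Real.log (1 - r x' τ' m / l)) := by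
    intro x' τ'
    rw [hμ, Finset.mul_sum, Real.exp_sum]
    refine Finset.prod_congr rfl fun m _ => ?_
    rw [Real.rpow_def_of_pos (hpos x' τ' m), mul_comm]
  have hμtexp : ∀ x' τ' : ℝ, μt x' τ' = Real.exp (-ε * ∑ m, Real.log (1 - r x' τ' m / lt)) := by
    intro x' τ'
    rw [hμt, Finset.mul_sum, Real.exp_sum]
    refine Finset.prod_congr rfl fun m _ => ?_
    rw [Real.rpow_def_of_pos (hpos' x' τ' m), mul_comm]
  have hMpos : 0 < μt x τ := by
    rw [hμtexp]; exact Real.exp_pos _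
  -- derivative of μ in τ
  have hSaτ : HasDerivAt (fun τ' => ∑ m, Real.log (1 - r x τ' m / l))
      (∑ m, (0 - deriv (fun τ' => r x τ' m) τ / l) / (1 - r x τ m / l)) τ := by
    refine HasDerivAt.fun_sum fun m _ => ?_
    exact ((hasDerivAt_const τ (1:ℝ)).sub ((hdt m).hasDerivAt.div_const l)).log
      (ne_of_gt (hpos x τ m))
  have hμτ : HasDerivAt (fun τ' => μ x τ')
      (Real.exp (-ε * ∑ m, Real.log (1 - r x τ m / l)) *
        (-ε * ∑ m, (0 - deriv (fun τ' => r x τ' m) τ / l) / (1 - r x τ m / l))) τ := by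
    have h := (hSaτ.const_mul (-ε)).exp
    have hfun : (fun τ' => μ x τ')
        = fun τ' => Real.exp (-ε * ∑ m, Real.log (1 - r x τ' m / l)) :=
      funext fun τ' => hμexp x τ'
    rw [hfun]; exact h
  -- derivative of μ/μt in x
  have hSax : HasDerivAt (fun x' => ∑ m, Real.log (1 - r x' τ m / l))
      (∑ m, (0 - deriv (fun x' => r x' τ m) x / l) / (1 - r x τ m / l)) x := by
    refine HasDerivAt.fun_sum fun m _ => ?_
    exact ((hasDerivAt_const x (1:ℝ)).sub ((hdx m).hasDerivAt.div_const l)).log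
      (ne_of_gt (hpos x τ m))
  have hSbx : HasDerivAt (fun x' => ∑ m, Real.log (1 - r x' τ m / lt))
      (∑ m, (0 - deriv (fun x' => r x' τ m) x / lt) / (1 - r x τ m / lt)) x := by
    refine HasDerivAt.fun_sum fun m _ => ?_
    exact ((hasDerivAt_const x (1:ℝ)).sub ((hdx m).hasDerivAt.div_const lt)).log
      (ne_of_gt (hpos' x τ m))
  have hqx : HasDerivAt (fun x' => μ x' τ / μt x' τ)
      (Real.exp (-ε * ((∑ m, Real.log (1 - r x τ m / l)) - ∑ m, Real.log (1 - r x τ m / lt))) *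
        (-ε * ((∑ m, (0 - deriv (fun x' => r x' τ m) x / l) / (1 - r x τ m / l))
            - ∑ m, (0 - deriv (fun x' => r x' τ m) x / lt) / (1 - r x τ m / lt)))) x := by
    have h := (((hSax.sub hSbx)).const_mul (-ε)).exp
    have hfun : (fun x' => μ x' τ / μt x' τ)
        = fun x' => Real.exp (-ε * ((∑ m, Real.log (1 - r x' τ m / l))
            - ∑ m, Real.log (1 - r x' τ m / lt))) := by
      funext x'
      rw [hμexp, hμtexp, ← Real.exp_sub]
      congr 1; ring
    rw [hfun]; exact h
  -- rewrite both sides using the computed derivatives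
  have hpdt : pdt μ x τ
      = Real.exp (-ε * ∑ m, Real.log (1 - r x τ m / l)) *
        (-ε * ∑ m, (0 - deriv (fun τ' => r x τ' m) τ / l) / (1 - r x τ m / l)) := by
    simpa [pdt] using hμτ.deriv
  have hpdx : pdx (fun x' τ' => μ x' τ' / μt x' τ') x τ
      = Real.exp (-ε * ((∑ m, Real.log (1 - r x τ m / l)) - ∑ m, Real.log (1 - r x τ m / lt))) *
        (-ε * ((∑ m, (0 - deriv (fun x' => r x' τ m) x / l) / (1 - r x τ m / l))
            - ∑ m, (0 - deriv (fun x' => r x' τ m) x / lt) / (1 - r x τ m / lt))) := by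
    simpa [pdx] using hqx.deriv
  rw [hpdt, hpdx]
  -- use the system to replace τ-derivatives by x-derivatives
  have he : ∀ m : Fin N, deriv (fun τ' => r x τ' m) τ
      = (1 / ((1 - r x τ m / lt) * μt x τ)) * deriv (fun x' => r x' τ m) x :=
    fun m => hsys m x τ
  -- split exp of difference, identify exp(-ε Sb) with μt
  have hsplit : Real.exp (-ε * ((∑ m, Real.log (1 - r x τ m / l))
        - ∑ m, Real.log (1 - r x τ m / lt)))
      = Real.exp (-ε * ∑ m, Real.log (1 - r x τ m / l)) / μt x τ := by
    rw [hμtexp, ← Real.exp_sub]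
    congr 1; ring
  rw [hsplit]
  set E := Real.exp (-ε * ∑ m, Real.log (1 - r x τ m / l)) with hE
  set M := μt x τ with hM
  have hM0 : M ≠ 0 := ne_of_gt hMpos
  have hltl : lt - l ≠ 0 := sub_ne_zero_of_ne (Ne.symm hll)
  -- reduce to a termwise algebraic identity
  simp only [he, ← Finset.sum_sub_distrib, Finset.mul_sum]

  refine Finset.sum_congr rfl fun m _ => ?_
  have hA : (1 - r x τ m / l) ≠ 0 := ne_of_gt (hpos x τ m)
  have hB : (1 - r x τ m / lt) ≠ 0 := ne_of_gt (hpos' x τ m)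
  have hA' : l - r x τ m ≠ 0 := by
    intro h
    apply hA
    rw [div_eq_one_iff_eq hl |>.mpr (by linarith)]
    ring
  have hB' : lt - r x τ m ≠ 0 := by
    intro h
    apply hB
    rw [div_eq_one_iff_eq hlt |>.mpr (by linarith)]
    ring
  field_simp [hA, hB, hA', hB', hM0, hltl, hl, hlt]
  ring
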